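/- Let a > 0 be real and let b ∈ ℂ with |b| < 1 and |a·b| < 1. Let s and r be the principal square roots of 1 - b² and 1 - a²b² respectively (both lie in the open right half-plane, so s and r are well-defined and nonzero). Set x₋ := b/s - a·b/r, y₋ := 1/s - 1/r, and M_n(b) := (i/2)·[[x₋ - 2i, -y₋], [y₋, -x₋ - 2i]] ∈ M₂(ℂ). Then det M_n(b) ≠ 0; in particular M_n(b) is invertible. -/

import Mathlib

open Complex

/-- The matrix `M_n(b) = (i/2)·[[x₋ - 2i, -y₋],[y₋, -x₋ - 2i]]` with
`x₋ = b/s - ab/r` and `y₋ = 1/s - 1/r`. -/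
noncomputable def Mn (a : ℝ) (b s r : ℂ) : Matrix (Fin 2) (Fin 2) ℂ :=
  (Complex.I / 2) •
    !![(b / s - (a : ℂ) * b / r) - 2 * Complex.I, -(1 / s - 1 / r);
       1 / s - 1 / r, -(b / s - (a : ℂ) * b / r) - 2 * Complex.I]

/-- for `a > 0`, `|b| < 1`, `|ab| < 1`, with `s`, `r` the principal
square roots of `1 - b²` and `1 - a²b²` (the unique square roots with positive
real part), `det M_n(b) ≠ 0`; in particular `M_n(b)` is invertible. -/
theorem statement14 (a : ℝ) (ha : 0 < a) (b : ℂ)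
    (hb : ‖b‖ < 1) (hab : ‖(a : ℂ) * b‖ < 1)
    (s r : ℂ)
    (hs2 : s ^ 2 = 1 - b ^ 2) (hsre : 0 < s.re)
    (hr2 : r ^ 2 = 1 - (a : ℂ) ^ 2 * b ^ 2) (hrre : 0 < r.re) :
    (Mn a b s r).det ≠ 0 ∧ IsUnit (Mn a b s r) := by
  have hs : s ≠ 0 := fun h => by simp [h] at hsre
  have hr : r ≠ 0 := fun h => by simp [h] at hrre
  have hdet : (Mn a b s r).det =
      -(1/4) * ((1/s - 1/r)^2 - (b/s - (a:ℂ)*b/r)^2 - 4) := by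
    rw [Mn, Matrix.det_smul, Matrix.det_fin_two_of, Fintype.card_fin]
    linear_combination (((1/s - 1/r)^2 - (b/s - (a:ℂ)*b/r)^2)/4 + Complex.I^2 - 1)
      * Complex.I_sq
  have hne : (Mn a b s r).det ≠ 0 := by
    rw [hdet]
    intro h
    have h0 : (1/s - 1/r)^2 - (b/s - (a:ℂ)*b/r)^2 - 4 = 0 := by
      rcases mul_eq_zero.mp h with h' | h'
      · norm_num at h'
      · exact h'
    -- clear denominators
    have h1 : (r - s)^2 - (b*r - (a:ℂ)*b*s)^2 - 4*(s*r)^2 = 0 := by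
      field_simp at h0
      linear_combination h0
    -- factor using s² = 1-b², r² = 1-a²b²
    have h2 : (-2 * (s*r)) * (s*r + 1 - (a:ℂ)*b^2) = 0 := by
      linear_combination h1 + r^2 * hs2 + s^2 * hr2
    have hsr : s * r = -(1 - (a:ℂ) * b^2) := by
      rcases mul_eq_zero.mp h2 with h' | h'
      · exfalso
        have hz : s * r = 0 := by linear_combination -h'/2
        exact mul_ne_zero hs hr hz
      · linear_combination h'
    -- squaring forces b²(1-a)² = 0
    have hsqr : (s*r)^2 = (-(1 - (a:ℂ)*b^2))^2 := by rw [hsr]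
    have hsq : (b * (1 - (a:ℂ)))^2 = 0 := by
      linear_combination -hsqr + (1 - (a:ℂ)^2*b^2) * hs2 + s^2 * hr2
    have hb0 : b = 0 ∨ (1 - (a:ℂ)) = 0 :=
      mul_eq_zero.mp (pow_eq_zero_iff (n := 2) (by norm_num) |>.mp hsq)
    rcases hb0 with hb0 | ha1
    · -- b = 0 : s = r = 1 but s r = -1
      subst hb0
      have hs1 : s = 1 := by
        have h3 : (s - 1) * (s + 1) = 0 := by linear_combination hs2
        rcases mul_eq_zero.mp h3 with h' | h'
        · linear_combination h'
        · exfalso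
          have h4 : s = -1 := by linear_combination h'
          rw [h4] at hsre; norm_num at hsre
      have hr1 : r = 1 := by
        have h3 : (r - 1) * (r + 1) = 0 := by linear_combination hr2
        rcases mul_eq_zero.mp h3 with h' | h'
        · linear_combination h'
        · exfalso
          have h4 : r = -1 := by linear_combination h'
          rw [h4] at hrre; norm_num at hrre
      rw [hs1, hr1] at hsr
      norm_num at hsr
    · -- a = 1 : s = r, then s r = -s² gives s = 0
      have hsr2 : s^2 = r^2 := by
        linear_combination hs2 - hr2 - b^2 * (1 + (a:ℂ)) * ha1
      have hseq : s = r := by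
        have h3 : (s - r) * (s + r) = 0 := by linear_combination hsr2
        rcases mul_eq_zero.mp h3 with h' | h'
        · linear_combination h'
        · exfalso
          have hsneg : s = -r := by linear_combination h'
          have hre : s.re = -r.re := by rw [hsneg]; simp
          linarith
      have h2r : r = 0 := by
        have h2sq : r^2 = 0 := by
          rw [hseq] at hsr
          linear_combination (hsr + hr2 + (a:ℂ)*b^2*ha1)/2
        exact pow_eq_zero_iff (n := 2) (by norm_num) |>.mp h2sq
      exact hr h2r
  exact ⟨hne, (Matrix.isUnit_iff_isUnit_det _).mpr (isUnit_iff_ne_zero.mpr hne)⟩
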